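/- Let X be a rack, R a reflexive compatible relation on X, and N a normal subgroup of Inn(X) (the subgroup of Aut(X) generated by the symmetries S_x). Then the N-orbit relation ∼_N (x ∼_N y iff x·g = y for some g ∈ N) permutes with R: ∼_N ∘ R = R ∘ ∼_N. -/
import Mathlib


/-- A rack: a set with operations `◁`, `◁⁻¹` satisfying (R1) and (R2). -/
class PaperRack (X : Type*) where
  act : X → X → X
  inv : X → X → X
  r1a : ∀ x y, inv (act x y) y = x
  r1b : ∀ x y, act (inv x y) y = x
  r2 : ∀ x y z, act (act x y) z = act (act x z) (act y z)

infixl:70 " ◁ " => PaperRack.act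
infixl:70 " ◁⁻¹ " => PaperRack.inv

/-- The symmetry `S_x : w ↦ w ◁ x`, as a permutation of the rack. -/
def rackSym {X : Type*} [PaperRack X] (x : X) : Equiv.Perm X where
  toFun w := w ◁ x
  invFun w := w ◁⁻¹ x
  left_inv w := PaperRack.r1a w x
  right_inv w := PaperRack.r1b w x

/-- The group `Inn(X)` of inner automorphisms: the subgroup of `Perm X`
generated by the symmetries `S_x`. -/
def Inn (X : Type*) [PaperRack X] : Subgroup (Equiv.Perm X) :=
  Subgroup.closure (Set.range (rackSym (X := X)))

/-- For a normal subgroup `N` of `Inn(X)`, the orbit relation `∼_N` permutes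
with any reflexive compatible relation `R` on `X`. -/
theorem orbit_congruence_permutes {X : Type*} [PaperRack X]
    (R : X → X → Prop) (hrefl : ∀ x, R x x)
    (hact : ∀ x y u v, R x y → R u v → R (x ◁ u) (y ◁ v))
    (hinv : ∀ x y u v, R x y → R u v → R (x ◁⁻¹ u) (y ◁⁻¹ v))
    (N : Subgroup (Equiv.Perm X)) (hN : N ≤ Inn X)
    (hnormal : ∀ g ∈ Inn X, ∀ n ∈ N, g * n * g⁻¹ ∈ N) :
    ∀ a b : X,
      (∃ c, (∃ g ∈ N, g a = c) ∧ R c b) ↔ (∃ c, R a c ∧ ∃ g ∈ N, g c = b) := by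
  -- Every element of Inn X preserves R.
  have key : ∀ g ∈ Inn X, (∀ x y, R x y → R (g x) (g y)) ∧
      (∀ x y, R x y → R (g⁻¹ x) (g⁻¹ y)) := by
    intro g hg
    refine Subgroup.closure_induction ?_ ?_ ?_ ?_ hg
    · rintro _ ⟨u, rfl⟩
      constructor
      · intro x y h; exact hact x y u u h (hrefl u)
      · intro x y h; exact hinv x y u u h (hrefl u)
    · exact ⟨fun x y h => h, fun x y h => h⟩
    · rintro g h _ _ ⟨hg1, hg2⟩ ⟨hh1, hh2⟩
      refine ⟨fun x y hr => hg1 _ _ (hh1 _ _ hr), fun x y hr => ?_⟩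
      simp only [mul_inv_rev, Equiv.Perm.mul_apply]
      exact hh2 _ _ (hg2 _ _ hr)
    · rintro g _ ⟨hg1, hg2⟩
      exact ⟨hg2, by simpa using hg1⟩
  intro a b
  constructor
  · rintro ⟨c, ⟨g, hgN, rfl⟩, hR⟩
    refine ⟨g⁻¹ b, ?_, g, hgN, by simp⟩
    have := (key g (hN hgN)).2 _ _ hR
    simpa using this
  · rintro ⟨c, hR, g, hgN, rfl⟩
    exact ⟨g a, ⟨g, hgN, rfl⟩, (key g (hN hgN)).1 _ _ hR⟩
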